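/- Let γ be a piecewise-smooth bounded loop and K > 0 with |γ'(t)| ≥ K for all t at which γ' is defined. Let F₀ ⊆ [0,1) be the set of points t (taken mod 1) that are sign-change points of γ', and assume F₀ is non-periodic: there is no r ∈ (0,1) with {f + r mod 1 : f ∈ F₀} = F₀. Then for all s, t ∈ [0,1) with s ≠ t, sup{ |γ'(u + s) − γ'(u + t)| : u ∈ ℝ such that both γ'(u+s) and γ'(u+t) are defined } ≥ K. -/

import Mathlib

/-- The set `F + ℤ = {f + k : f ∈ F, k ∈ ℤ}` of integer translates of points of `F`. -/
def BreaksSet (F : Set ℝ) : Set ℝ := {x : ℝ | ∃ f ∈ F, ∃ k : ℤ, x = f + k}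

/-- `γ` is a loop (1-periodic), continuous, and infinitely differentiable off `F + ℤ`;
i.e. a piecewise-smooth loop with breaks in `F + ℤ`. -/
def HasBreaksIn (γ : ℝ → ℝ) (F : Set ℝ) : Prop :=
  (∀ t, γ (t + 1) = γ t) ∧ Continuous γ ∧ ContDiffOn ℝ (⊤ : ℕ∞) γ (BreaksSet F)ᶜ

/-- `γ` is a piecewise-smooth loop. -/
def IsPiecewiseSmooth (γ : ℝ → ℝ) : Prop :=
  ∃ F : Set ℝ, F.Finite ∧ F ⊆ Set.Ico 0 1 ∧ HasBreaksIn γ F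

/-- A piecewise-smooth loop with breaks in `F + ℤ`, all of whose derivatives are
bounded on the complement of the breaks. -/
def BoundedBreaksIn (γ : ℝ → ℝ) (F : Set ℝ) : Prop :=
  HasBreaksIn γ F ∧ ∀ k : ℕ, ∃ M : ℝ, ∀ t ∈ (BreaksSet F)ᶜ, |iteratedDeriv k γ t| ≤ M

/-- `γ` is a piecewise-smooth bounded loop. -/
def IsPiecewiseSmoothBounded (γ : ℝ → ℝ) : Prop :=
  ∃ F : Set ℝ, F.Finite ∧ F ⊆ Set.Ico 0 1 ∧ BoundedBreaksIn γ F

/-- The right limit of `f` at `t`, with the variable ranging outside the set `B`. -/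
def RightLimAt (f : ℝ → ℝ) (B : Set ℝ) (t L : ℝ) : Prop :=
  Filter.Tendsto f (nhdsWithin t (Set.Ioi t \ B)) (nhds L)

/-- The left limit of `f` at `t`, with the variable ranging outside the set `B`. -/
def LeftLimAt (f : ℝ → ℝ) (B : Set ℝ) (t L : ℝ) : Prop :=
  Filter.Tendsto f (nhdsWithin t (Set.Iio t \ B)) (nhds L)

/-- `t` is a sign-change point of `f` (relative to the break set `B`): the one-sided
limits of `f` at `t` exist and have opposite nonzero signs. -/
def SignChangeAt (f : ℝ → ℝ) (B : Set ℝ) (t : ℝ) : Prop :=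
  ∃ Lp Lm : ℝ, RightLimAt f B t Lp ∧ LeftLimAt f B t Lm ∧ Lp * Lm < 0

/-- The 1-periodic step function equal to `1` on `[0, 1/2) + ℤ` and `-1` on `[1/2, 1) + ℤ`. -/
noncomputable def stepLoop : ℝ → ℝ := fun t => if Int.fract t < 1/2 then 1 else -1

open Set Filter Topology

lemma breaks_add_int {F : Set ℝ} (k : ℤ) (x : ℝ) :
    x + (k : ℝ) ∈ BreaksSet F ↔ x ∈ BreaksSet F := by
  constructor
  · rintro ⟨f, hf, m, hm⟩
    exact ⟨f, hf, m - k, by push_cast; linarith⟩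
  · rintro ⟨f, hf, m, hm⟩
    exact ⟨f, hf, m + k, by push_cast; linarith⟩

lemma breaks_discrete {F : Set ℝ} (hFfin : F.Finite) (hFsub : F ⊆ Set.Ico 0 1) (a : ℝ) :
    ∃ ε > 0, ∀ x ∈ BreaksSet F, |x - a| < ε → x = a := by
  set S : Set ℝ := (BreaksSet F ∩ Icc (a - 1) (a + 1)) \ {a} with hS
  have hSfin : S.Finite := by
    have hsub : S ⊆ (fun p : ℝ × ℤ => p.1 + (p.2 : ℝ)) ''
        (F ×ˢ ((Finset.Icc ⌈a - 2⌉ ⌊a + 1⌋ : Finset ℤ) : Set ℤ)) := by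
      rintro x ⟨⟨⟨f, hf, k, rfl⟩, hIcc⟩, -⟩
      refine ⟨(f, k), ⟨hf, ?_⟩, rfl⟩
      have hf0 := hFsub hf
      simp only [Finset.coe_Icc, Set.mem_Icc]
      constructor
      · exact Int.ceil_le.mpr (by cases hIcc; cases hf0; linarith)
      · exact Int.le_floor.mpr (by cases hIcc; cases hf0; linarith)
    exact Set.Finite.subset ((hFfin.prod (Finset.Icc ⌈a - 2⌉ ⌊a + 1⌋).finite_toSet).image _) hsub
  by_cases hne : S.Nonempty
  · obtain ⟨x₀, hx₀, hmin⟩ := Set.exists_min_image S (fun y => |y - a|) hSfin hne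
    have hx₀a : x₀ ≠ a := hx₀.2
    have hpos : 0 < |x₀ - a| := abs_pos.mpr (sub_ne_zero.mpr hx₀a)
    refine ⟨min 1 |x₀ - a|, lt_min one_pos hpos, ?_⟩
    intro x hx hlt
    by_contra hxa
    have hxS : x ∈ S := ⟨⟨hx, by
      rw [mem_Icc]
      have := abs_lt.mp (lt_of_lt_of_le hlt (min_le_left _ _))
      constructor <;> linarith⟩, hxa⟩
    have := hmin x hxS
    have := lt_of_lt_of_le hlt (min_le_right _ _)
    linarith
  · refine ⟨1, one_pos, ?_⟩
    intro x hx hlt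
    by_contra hxa
    exact hne ⟨x, ⟨⟨hx, by
      rw [mem_Icc]; have := abs_lt.mp hlt; constructor <;> linarith⟩, hxa⟩⟩

lemma breaks_open_compl {F : Set ℝ} (hFfin : F.Finite) (hFsub : F ⊆ Set.Ico 0 1) :
    IsOpen (BreaksSet F)ᶜ := by
  rw [Metric.isOpen_iff]
  intro a ha
  obtain ⟨ε, hε, hd⟩ := breaks_discrete hFfin hFsub a
  refine ⟨ε, hε, ?_⟩
  intro x hx hxB
  exact ha (by rwa [hd x hxB (by rw [Metric.mem_ball, Real.dist_eq] at hx; exact hx)] at hxB)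

lemma map_nhdsWithin_add (c x : ℝ) (s : Set ℝ) :
    Filter.map (· + c) (𝓝[s] x) = 𝓝[(· + c) '' s] (x + c) := by
  have := (Homeomorph.addRight c).isEmbedding.map_nhdsWithin_eq s x
  simpa using this

lemma sign_trans {x a b y : ℝ} (h1 : 0 < x * a) (h2 : 0 < a * b) (h3 : 0 < y * b) :
    0 < x * y := by
  rcases lt_trichotomy a 0 with ha | ha | ha
  · have hb : b < 0 := by nlinarith
    have hx : x < 0 := by nlinarith
    have hy : y < 0 := by nlinarith
    exact mul_pos_of_neg_of_neg hx hy
  · rw [ha] at h1; simp at h1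
  · have hb : 0 < b := by nlinarith
    have hx : 0 < x := by nlinarith
    have hy : 0 < y := by nlinarith
    exact mul_pos hx hy

lemma sign_prod_neg {a b a' b' : ℝ} (h1 : 0 < a * a') (h2 : 0 < b * b') (h3 : a * b < 0) :
    a' * b' < 0 := by
  nlinarith [mul_pos h1 h2]

section aux
variable {B : Set ℝ} {f : ℝ → ℝ} {K : ℝ}

lemma constSign (hK : 0 < K) (hfc : ContinuousOn f Bᶜ) (hbig : ∀ x ∈ Bᶜ, K ≤ |f x|)
    {a b : ℝ} (hsub : Set.Ioo a b ⊆ Bᶜ) {x y : ℝ} (hx : x ∈ Set.Ioo a b)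
    (hy : y ∈ Set.Ioo a b) : 0 < f x * f y := by
  have key : ∀ x y : ℝ, x ∈ Set.Ioo a b → y ∈ Set.Ioo a b → x ≤ y → 0 < f x * f y := by
    intro x y hx hy hxy
    have hIcc : Icc x y ⊆ Set.Ioo a b := fun z hz =>
      ⟨lt_of_lt_of_le hx.1 hz.1, lt_of_le_of_lt hz.2 hy.2⟩
    have hcont : ContinuousOn f (Icc x y) := hfc.mono (fun z hz => hsub (hIcc hz))
    have hxne : K ≤ |f x| := hbig x (hsub hx)
    have hyne : K ≤ |f y| := hbig y (hsub hy)
    by_contra h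
    push_neg at h
    have h0 : (0:ℝ) ∈ f '' Icc x y := by
      rcases lt_or_ge 0 (f x) with hfx | hfx
      · have hfy : f y ≤ 0 := by nlinarith
        exact intermediate_value_Icc' hxy hcont ⟨hfy, le_of_lt hfx⟩
      · have hfx' : f x < 0 := by rcases abs_cases (f x) with ⟨e1, e2⟩ | ⟨e1, e2⟩ <;> nlinarith
        have hfy : 0 ≤ f y := by nlinarith
        exact intermediate_value_Icc hxy hcont ⟨le_of_lt hfx', hfy⟩
    obtain ⟨z, hz, hfz⟩ := h0
    have := hbig z (hsub (hIcc hz))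
    rw [hfz] at this
    simp at this
    linarith
  rcases le_total x y with h | h
  · exact key x y hx hy h
  · rw [mul_comm]; exact key y x hy hx h

lemma neBotR {a ε : ℝ} (hε : 0 < ε) (hdisj : Set.Ioo a (a + ε) ⊆ Bᶜ) :
    (𝓝[Set.Ioi a \ B] a).NeBot := by
  have h1 : (𝓝[Set.Ioo a (a + ε)] a).NeBot := by
    rw [nhdsWithin_Ioo_eq_nhdsGT (by linarith)]; infer_instance
  exact h1.mono (nhdsWithin_mono a (fun y hy => ⟨hy.1, hdisj hy⟩))

lemma neBotL {a ε : ℝ} (hε : 0 < ε) (hdisj : Set.Ioo (a - ε) a ⊆ Bᶜ) :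
    (𝓝[Set.Iio a \ B] a).NeBot := by
  have h1 : (𝓝[Set.Ioo (a - ε) a] a).NeBot := by
    rw [nhdsWithin_Ioo_eq_nhdsLT (by linarith)]; infer_instance
  exact h1.mono (nhdsWithin_mono a (fun y hy => ⟨hy.2, hdisj hy⟩))

lemma limR (hK : 0 < K) (hfc : ContinuousOn f Bᶜ)
    (hfd : ∀ x ∈ Bᶜ, DifferentiableAt ℝ f x) {M : NNReal} (hM : ∀ x ∈ Bᶜ, ‖deriv f x‖₊ ≤ M)
    (hbig : ∀ x ∈ Bᶜ, K ≤ |f x|) {a ε : ℝ} (hε : 0 < ε)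
    (hdisj : Set.Ioo a (a + ε) ⊆ Bᶜ) :
    ∃ L, RightLimAt f B a L ∧ (∀ v ∈ Set.Ioo a (a + ε), 0 < L * f v) ∧ K ≤ |L| := by
  have hlip : LipschitzOnWith M f (Set.Ioo a (a + ε)) :=
    (convex_Ioo a (a + ε)).lipschitzOnWith_of_nnnorm_deriv_le
      (fun x hx => hfd x (hdisj hx)) (fun x hx => hM x (hdisj hx))
  obtain ⟨g, hg, hEq⟩ := hlip.extend_real
  have hmem : Set.Ioo (a - ε) (a + ε) ∈ 𝓝 a := Ioo_mem_nhds (by linarith) (by linarith)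
  have hEv : ∀ᶠ y in 𝓝[Set.Ioi a \ B] a, g y = f y := by
    filter_upwards [self_mem_nhdsWithin, mem_nhdsWithin_of_mem_nhds hmem] with y hy hy2
    exact (hEq ⟨hy.1, hy2.2⟩).symm
  have hT : Tendsto f (𝓝[Set.Ioi a \ B] a) (𝓝 (g a)) :=
    Filter.Tendsto.congr' hEv ((hg.continuous.tendsto a).mono_left nhdsWithin_le_nhds)
  have hsubS : Set.Ioo a (a + ε) ⊆ Set.Ioi a \ B := fun y hy => ⟨hy.1, hdisj hy⟩
  have hT' : Tendsto f (𝓝[Set.Ioo a (a + ε)] a) (𝓝 (g a)) :=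
    hT.mono_left (nhdsWithin_mono a hsubS)
  haveI hnb : (𝓝[Set.Ioo a (a + ε)] a).NeBot := by
    rw [nhdsWithin_Ioo_eq_nhdsGT (by linarith : a < a + ε)]; infer_instance
  have hv₀ : a + ε / 2 ∈ Set.Ioo a (a + ε) := ⟨by linarith, by linarith⟩
  have hfv₀ : K ≤ |f (a + ε / 2)| := hbig _ (hdisj hv₀)
  rcases lt_or_ge 0 (f (a + ε / 2)) with hpos | hneg
  · have hall : ∀ v ∈ Set.Ioo a (a + ε), K ≤ f v := by
      intro v hv
      have hp := constSign hK hfc hbig hdisj hv hv₀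
      have hfvpos : 0 < f v := by nlinarith
      have := hbig v (hdisj hv)
      rwa [abs_of_pos hfvpos] at this
    have hL : K ≤ g a := ge_of_tendsto hT' (by
      filter_upwards [self_mem_nhdsWithin] with v hv; exact hall v hv)
    refine ⟨g a, hT, fun v hv =>
      mul_pos (lt_of_lt_of_le hK hL) (lt_of_lt_of_le hK (hall v hv)), ?_⟩
    calc K ≤ g a := hL
    _ ≤ |g a| := le_abs_self _
  · have hfneg : f (a + ε / 2) < 0 := by
      rcases abs_cases (f (a + ε / 2)) with ⟨e1, e2⟩ | ⟨e1, e2⟩ <;> nlinarith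
    have hall : ∀ v ∈ Set.Ioo a (a + ε), f v ≤ -K := by
      intro v hv
      have hp := constSign hK hfc hbig hdisj hv hv₀
      have hfvneg : f v < 0 := by nlinarith
      have := hbig v (hdisj hv)
      rw [abs_of_neg hfvneg] at this
      linarith
    have hL : g a ≤ -K := le_of_tendsto hT' (by
      filter_upwards [self_mem_nhdsWithin] with v hv; exact hall v hv)
    refine ⟨g a, hT, fun v hv =>
      mul_pos_of_neg_of_neg (by linarith) (by linarith [hall v hv]), ?_⟩
    rw [abs_of_neg (by linarith)]
    linarith

lemma limL (hK : 0 < K) (hfc : ContinuousOn f Bᶜ)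
    (hfd : ∀ x ∈ Bᶜ, DifferentiableAt ℝ f x) {M : NNReal} (hM : ∀ x ∈ Bᶜ, ‖deriv f x‖₊ ≤ M)
    (hbig : ∀ x ∈ Bᶜ, K ≤ |f x|) {a ε : ℝ} (hε : 0 < ε)
    (hdisj : Set.Ioo (a - ε) a ⊆ Bᶜ) :
    ∃ L, LeftLimAt f B a L ∧ (∀ v ∈ Set.Ioo (a - ε) a, 0 < L * f v) ∧ K ≤ |L| := by
  have hlip : LipschitzOnWith M f (Set.Ioo (a - ε) a) :=
    (convex_Ioo (a - ε) a).lipschitzOnWith_of_nnnorm_deriv_le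
      (fun x hx => hfd x (hdisj hx)) (fun x hx => hM x (hdisj hx))
  obtain ⟨g, hg, hEq⟩ := hlip.extend_real
  have hmem : Set.Ioo (a - ε) (a + ε) ∈ 𝓝 a := Ioo_mem_nhds (by linarith) (by linarith)
  have hEv : ∀ᶠ y in 𝓝[Set.Iio a \ B] a, g y = f y := by
    filter_upwards [self_mem_nhdsWithin, mem_nhdsWithin_of_mem_nhds hmem] with y hy hy2
    exact (hEq ⟨hy2.1, hy.1⟩).symm
  have hT : Tendsto f (𝓝[Set.Iio a \ B] a) (𝓝 (g a)) :=
    Filter.Tendsto.congr' hEv ((hg.continuous.tendsto a).mono_left nhdsWithin_le_nhds)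
  have hsubS : Set.Ioo (a - ε) a ⊆ Set.Iio a \ B := fun y hy => ⟨hy.2, hdisj hy⟩
  have hT' : Tendsto f (𝓝[Set.Ioo (a - ε) a] a) (𝓝 (g a)) :=
    hT.mono_left (nhdsWithin_mono a hsubS)
  haveI hnb : (𝓝[Set.Ioo (a - ε) a] a).NeBot := by
    rw [nhdsWithin_Ioo_eq_nhdsLT (by linarith : a - ε < a)]; infer_instance
  have hv₀ : a - ε / 2 ∈ Set.Ioo (a - ε) a := ⟨by linarith, by linarith⟩
  have hfv₀ : K ≤ |f (a - ε / 2)| := hbig _ (hdisj hv₀)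
  rcases lt_or_ge 0 (f (a - ε / 2)) with hpos | hneg
  · have hall : ∀ v ∈ Set.Ioo (a - ε) a, K ≤ f v := by
      intro v hv
      have hp := constSign hK hfc hbig hdisj hv hv₀
      have hfvpos : 0 < f v := by nlinarith
      have := hbig v (hdisj hv)
      rwa [abs_of_pos hfvpos] at this
    have hL : K ≤ g a := ge_of_tendsto hT' (by
      filter_upwards [self_mem_nhdsWithin] with v hv; exact hall v hv)
    refine ⟨g a, hT, fun v hv =>
      mul_pos (lt_of_lt_of_le hK hL) (lt_of_lt_of_le hK (hall v hv)), ?_⟩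
    calc K ≤ g a := hL
    _ ≤ |g a| := le_abs_self _
  · have hfneg : f (a - ε / 2) < 0 := by
      rcases abs_cases (f (a - ε / 2)) with ⟨e1, e2⟩ | ⟨e1, e2⟩ <;> nlinarith
    have hall : ∀ v ∈ Set.Ioo (a - ε) a, f v ≤ -K := by
      intro v hv
      have hp := constSign hK hfc hbig hdisj hv hv₀
      have hfvneg : f v < 0 := by nlinarith
      have := hbig v (hdisj hv)
      rw [abs_of_neg hfvneg] at this
      linarith
    have hL : g a ≤ -K := le_of_tendsto hT' (by
      filter_upwards [self_mem_nhdsWithin] with v hv; exact hall v hv)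
    refine ⟨g a, hT, fun v hv =>
      mul_pos_of_neg_of_neg (by linarith) (by linarith [hall v hv]), ?_⟩
    rw [abs_of_neg (by linarith)]
    linarith

lemma signChange_shift (hper : ∀ (k : ℤ) (x : ℝ), f (x + (k : ℝ)) = f x)
    (hB : ∀ (k : ℤ) (x : ℝ), x + (k : ℝ) ∈ B ↔ x ∈ B) (k : ℤ) {x : ℝ}
    (h : SignChangeAt f B x) : SignChangeAt f B (x + (k : ℝ)) := by
  obtain ⟨Lp, Lm, h1, h2, h3⟩ := h
  have himgR : (· + (k : ℝ)) '' (Set.Ioi x \ B) = Set.Ioi (x + (k : ℝ)) \ B := by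
    ext y
    constructor
    · rintro ⟨z, ⟨hz1, hz2⟩, rfl⟩
      exact ⟨by simpa using hz1, fun hy => hz2 ((hB k z).mp hy)⟩
    · rintro ⟨hy1, hy2⟩
      exact ⟨y - k, ⟨by simp at hy1 ⊢; linarith, fun hz => hy2 (by
        have := (hB k (y - k)).mpr hz; simpa using this)⟩, by ring⟩
  have himgL : (· + (k : ℝ)) '' (Set.Iio x \ B) = Set.Iio (x + (k : ℝ)) \ B := by
    ext y
    constructor
    · rintro ⟨z, ⟨hz1, hz2⟩, rfl⟩
      exact ⟨by simpa using hz1, fun hy => hz2 ((hB k z).mp hy)⟩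
    · rintro ⟨hy1, hy2⟩
      exact ⟨y - k, ⟨by simp at hy1 ⊢; linarith, fun hz => hy2 (by
        have := (hB k (y - k)).mpr hz; simpa using this)⟩, by ring⟩
  refine ⟨Lp, Lm, ?_, ?_, h3⟩
  · unfold RightLimAt at h1 ⊢
    rw [← himgR, ← map_nhdsWithin_add, Filter.tendsto_map'_iff]
    have he : f ∘ (· + (k : ℝ)) = f := funext fun y => hper k y
    rwa [he]
  · unfold LeftLimAt at h2 ⊢
    rw [← himgL, ← map_nhdsWithin_add, Filter.tendsto_map'_iff]
    have he : f ∘ (· + (k : ℝ)) = f := funext fun y => hper k y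
    rwa [he]

end aux

/-- Let `γ` be a piecewise-smooth bounded loop with `|γ'| ≥ K > 0` off the
breaks, and let `F₀ ⊆ [0,1)` be its set of sign-change points mod 1.  If `F₀` is
non-periodic, then for distinct `s, t ∈ [0,1)` the sup of `|γ'(u+s) − γ'(u+t)|` over the
`u` where both are defined is at least `K` (expressed as: every `c < K` is exceeded). -/
theorem stmt15 (γ : ℝ → ℝ) (F : Set ℝ) (hFfin : F.Finite) (hFsub : F ⊆ Set.Ico 0 1)
    (hγ : BoundedBreaksIn γ F) (K : ℝ) (hK : 0 < K)
    (hbdd : ∀ t ∈ (BreaksSet F)ᶜ, K ≤ |deriv γ t|)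
    (F₀ : Set ℝ)
    (hF₀ : F₀ = {t ∈ Set.Ico (0:ℝ) 1 | SignChangeAt (deriv γ) (BreaksSet F) t})
    (hnonper : ¬ ∃ r : ℝ, r ∈ Set.Ioo (0:ℝ) 1 ∧
      (fun f => Int.fract (f + r)) '' F₀ = F₀) :
    ∀ s ∈ Set.Ico (0:ℝ) 1, ∀ t ∈ Set.Ico (0:ℝ) 1, s ≠ t →
      ∀ c : ℝ, c < K →
        ∃ u : ℝ, u + s ∉ BreaksSet F ∧ u + t ∉ BreaksSet F ∧
          c < |deriv γ (u + s) - deriv γ (u + t)| := by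
  intro s hs t ht hst c hc
  by_contra hcon
  push_neg at hcon
  set B := BreaksSet F with hBdef
  -- basic facts
  have hPer : Function.Periodic γ 1 := fun x => hγ.1.1 x
  have hperZ : ∀ (k : ℤ) (x : ℝ), γ (x + (k : ℝ)) = γ x := by
    intro k x
    simpa using (hPer.int_mul k) x
  have hfper : ∀ (k : ℤ) (x : ℝ), deriv γ (x + (k : ℝ)) = deriv γ x := by
    intro k x
    have h1 : (fun y => γ (y + (k : ℝ))) = γ := funext fun y => hperZ k y
    calc deriv γ (x + (k : ℝ)) = deriv (fun y => γ (y + (k : ℝ))) x :=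
          (deriv_comp_add_const γ (k : ℝ) x).symm
    _ = deriv γ x := by rw [h1]
  have hBint : ∀ (k : ℤ) (x : ℝ), x + (k : ℝ) ∈ B ↔ x ∈ B := fun k x => breaks_add_int k x
  have hdisc : ∀ a : ℝ, ∃ ε > 0, ∀ x ∈ B, |x - a| < ε → x = a :=
    fun a => breaks_discrete hFfin hFsub a
  have hop : IsOpen Bᶜ := breaks_open_compl hFfin hFsub
  have hsmooth : ContDiffOn ℝ (⊤ : ℕ∞) γ Bᶜ := hγ.1.2.2
  have hfc : ContinuousOn (deriv γ) Bᶜ :=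
    hsmooth.continuousOn_deriv_of_isOpen hop (WithTop.coe_le_coe.mpr le_top)
  have hfd : ∀ x ∈ Bᶜ, DifferentiableAt ℝ (deriv γ) x := by
    intro x hx
    have h2 : ContDiffOn ℝ 1 (deriv γ) Bᶜ := hsmooth.deriv_of_isOpen hop (WithTop.coe_le_coe.mpr le_top)
    exact (h2.differentiableOn one_ne_zero).differentiableAt (hop.mem_nhds hx)
  obtain ⟨M₂, hM₂⟩ := hγ.2 2
  set M : NNReal := ⟨max M₂ 0, le_max_right M₂ 0⟩ with hMdef
  have hM : ∀ x ∈ Bᶜ, ‖deriv (deriv γ) x‖₊ ≤ M := by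
    intro x hx
    have h := hM₂ x hx
    rw [iteratedDeriv_succ, iteratedDeriv_one] at h
    have h2 : ‖deriv (deriv γ) x‖ ≤ (M : ℝ) := by
      rw [Real.norm_eq_abs]; exact le_trans h (le_max_left _ _)
    rwa [← coe_nnnorm, NNReal.coe_le_coe] at h2
  -- the key contradiction for a given shift r
  have key : ∀ r, r ∈ Set.Ioo (0:ℝ) 1 →
      (∀ v, v ∉ B → v + r ∉ B → |deriv γ v - deriv γ (v + r)| ≤ c) → False := by
    intro r hr hclose
    have hsg1 : ∀ v, v ∉ B → v + r ∉ B → 0 < deriv γ v * deriv γ (v + r) := by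
      intro v hv hvr
      have h1 := hbdd v hv
      have h2 := hbdd (v + r) hvr
      have h3 := hclose v hv hvr
      rcases abs_cases (deriv γ v) with ⟨e1, e2⟩ | ⟨e1, e2⟩ <;>
        rcases abs_cases (deriv γ (v + r)) with ⟨f1, f2⟩ | ⟨f1, f2⟩ <;>
        rcases abs_cases (deriv γ v - deriv γ (v + r)) with ⟨g1, g2⟩ | ⟨g1, g2⟩ <;> nlinarith
    have hsg2 : ∀ v, v ∉ B → v + (1 - r) ∉ B → 0 < deriv γ v * deriv γ (v + (1 - r)) := by
      intro v hv hvr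
      have e : v + (1 - r) = (v - r) + ((1 : ℤ) : ℝ) := by push_cast; ring
      have hv2 : v - r ∉ B := by
        rw [e] at hvr
        intro h
        exact hvr ((hBint 1 (v - r)).mpr h)
      have hv3 : v - r + r ∉ B := by
        have e2 : v - r + r = v := by ring
        rw [e2]; exact hv
      have h := hsg1 (v - r) hv2 hv3
      have e2 : v - r + r = v := by ring
      rw [e2] at h
      have e3 : deriv γ (v + (1 - r)) = deriv γ (v - r) := by
        rw [e]; exact hfper 1 (v - r)
      rw [e3, mul_comm]
      exact h
    -- forward invariance of F₀ under shift by r'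
    have fwd : ∀ r', r' ∈ Set.Ioo (0:ℝ) 1 →
        (∀ v, v ∉ B → v + r' ∉ B → 0 < deriv γ v * deriv γ (v + r')) →
        ∀ p ∈ F₀, Int.fract (p + r') ∈ F₀ := by
      intro r' hr' hsg p hp
      rw [hF₀] at hp
      obtain ⟨hpIco, Lp, Lm, hRp, hLmm, hLpLm⟩ := hp
      obtain ⟨εp, hεp, hdp⟩ := hdisc p
      obtain ⟨εq, hεq, hdq⟩ := hdisc (p + r')
      set q := p + r' with hq
      set ε := min εp εq with hεdef
      have hε0 : 0 < ε := lt_min hεp hεq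
      have dPR : Set.Ioo p (p + ε) ⊆ Bᶜ := by
        intro x hx hxB
        have hx1 := hx.1
        have hx2 := hx.2
        have hle : ε ≤ εp := min_le_left _ _
        have : x = p := hdp x hxB (by rw [abs_lt]; constructor <;> linarith)
        exact (ne_of_gt hx1) this
      have dPL : Set.Ioo (p - ε) p ⊆ Bᶜ := by
        intro x hx hxB
        have hx1 := hx.1
        have hx2 := hx.2
        have hle : ε ≤ εp := min_le_left _ _
        have : x = p := hdp x hxB (by rw [abs_lt]; constructor <;> linarith)
        exact (ne_of_lt hx2) this
      have dQR : Set.Ioo q (q + ε) ⊆ Bᶜ := by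
        intro x hx hxB
        have hx1 := hx.1
        have hx2 := hx.2
        have hle : ε ≤ εq := min_le_right _ _
        have : x = q := hdq x hxB (by rw [abs_lt]; constructor <;> linarith)
        exact (ne_of_gt hx1) this
      have dQL : Set.Ioo (q - ε) q ⊆ Bᶜ := by
        intro x hx hxB
        have hx1 := hx.1
        have hx2 := hx.2
        have hle : ε ≤ εq := min_le_right _ _
        have : x = q := hdq x hxB (by rw [abs_lt]; constructor <;> linarith)
        exact (ne_of_lt hx2) this
      obtain ⟨L₀, hR₀, hsgnP, _⟩ := limR hK hfc hfd hM hbdd hε0 dPR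
      haveI := neBotR (B := B) hε0 dPR
      have hLpEq : Lp = L₀ := tendsto_nhds_unique hRp hR₀
      obtain ⟨L₁, hL₁, hsgnPL, _⟩ := limL hK hfc hfd hM hbdd hε0 dPL
      haveI := neBotL (B := B) hε0 dPL
      have hLmEq : Lm = L₁ := tendsto_nhds_unique hLmm hL₁
      obtain ⟨Lp', hRq, hsgnQ, _⟩ := limR hK hfc hfd hM hbdd hε0 dQR
      obtain ⟨Lm', hLq, hsgnQL, _⟩ := limL hK hfc hfd hM hbdd hε0 dQL
      -- right-side sign chase
      have hvP : p + ε / 2 ∈ Set.Ioo p (p + ε) := ⟨by linarith, by linarith⟩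
      have hvQ : q + ε / 2 ∈ Set.Ioo q (q + ε) := ⟨by linarith, by linarith⟩
      have e3 : p + ε / 2 + r' = q + ε / 2 := by rw [hq]; ring
      have hsg0 := hsg (p + ε / 2) (dPR hvP) (by rw [e3]; exact dQR hvQ)
      rw [e3] at hsg0
      have h4 := hsgnP _ hvP
      have h5 := hsgnQ _ hvQ
      rw [← hLpEq] at h4
      have hPP : 0 < Lp * Lp' := sign_trans h4 hsg0 h5
      -- left-side sign chase
      have hwP : p - ε / 2 ∈ Set.Ioo (p - ε) p := ⟨by linarith, by linarith⟩
      have hwQ : q - ε / 2 ∈ Set.Ioo (q - ε) q := ⟨by linarith, by linarith⟩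
      have e4 : p - ε / 2 + r' = q - ε / 2 := by rw [hq]; ring
      have hsg0' := hsg (p - ε / 2) (dPL hwP) (by rw [e4]; exact dQL hwQ)
      rw [e4] at hsg0'
      have h6 := hsgnPL _ hwP
      have h7 := hsgnQL _ hwQ
      rw [← hLmEq] at h6
      have hMM : 0 < Lm * Lm' := sign_trans h6 hsg0' h7
      have hQsc : SignChangeAt (deriv γ) B q :=
        ⟨Lp', Lm', hRq, hLq, sign_prod_neg hPP hMM hLpLm⟩
      have hshift := signChange_shift hfper hBint (-⌊q⌋) hQsc
      have e5 : q + ((-⌊q⌋ : ℤ) : ℝ) = Int.fract q := by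
        push_cast
        rw [← Int.self_sub_floor]
        ring
      rw [e5] at hshift
      rw [hF₀]
      exact ⟨⟨Int.fract_nonneg q, Int.fract_lt_one q⟩, hshift⟩
    -- now build the forbidden periodicity
    have himg : (fun x => Int.fract (x + r)) '' F₀ = F₀ := by
      apply Set.Subset.antisymm
      · rintro x ⟨p, hp, rfl⟩
        exact fwd r hr hsg1 p hp
      · intro p hp
        have hp01 : p ∈ Set.Ico (0:ℝ) 1 := by rw [hF₀] at hp; exact hp.1
        refine ⟨Int.fract (p + (1 - r)),
          fwd (1 - r) ⟨by linarith [hr.2], by linarith [hr.1]⟩ hsg2 p hp, ?_⟩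
        show Int.fract (Int.fract (p + (1 - r)) + r) = p
        have e1 : Int.fract (p + (1 - r)) + r = (p + 1) - (⌊p + (1 - r)⌋ : ℝ) := by
          rw [← Int.self_sub_floor]; ring
        rw [e1, Int.fract_sub_intCast]
        have e2 : p + 1 = p + ((1 : ℤ) : ℝ) := by norm_num
        rw [e2, Int.fract_add_intCast, Int.fract_eq_self.mpr ⟨hp01.1, hp01.2⟩]
    exact hnonper ⟨r, hr, himg⟩
  -- apply `key` according to the order of s and t
  rcases lt_or_gt_of_ne hst with hlt | hlt
  · apply key (t - s) ⟨by linarith, by linarith [ht.2, hs.1]⟩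
    intro v hv hvr
    have h := hcon (v - s)
    have e1 : v - s + s = v := by ring
    have e2 : v - s + t = v + (t - s) := by ring
    rw [e1, e2] at h
    exact h hv hvr
  · apply key (s - t) ⟨by linarith, by linarith [hs.2, ht.1]⟩
    intro v hv hvr
    have h := hcon (v - t)
    have e1 : v - t + t = v := by ring
    have e2 : v - t + s = v + (s - t) := by ring
    rw [e1, e2] at h
    have h2 := h hvr hv
    rwa [abs_sub_comm] at h2
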